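/- Let n ≥ 2 and γ ∈ (0,1). There exist constants τ̂ > 0 and K ≥ 2/γ, depending only on γ and n, such that for every simplex S ⊂ ℝⁿ with affinely independent vertices x₁,…,x_{n+1} and relative width w(S) > γ, setting x₀ = (1/(n+1))·Σᵢ xᵢ and ρ = K·diam(S), one has the inclusion B_{ρ(1+τ̂)}(x₀) ⊆ ∪_{i=1}^{n+1} B_ρ(xᵢ). -/

import Mathlib

open MeasureTheory Metric Set
open scoped RealInnerProductSpace

noncomputable section

/-- The width of the simplex with vertices `x i`: the minimum over unit directions `v` of
`maxᵢ ⟪xᵢ, v⟫ - minᵢ ⟪xᵢ, v⟫`. -/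
def simplexWidth {n : ℕ} (x : Fin (n + 1) → EuclideanSpace ℝ (Fin n)) : ℝ :=
  sInf ((fun v => (Finset.univ.sup' Finset.univ_nonempty fun i => ⟪x i, v⟫)
      - Finset.univ.inf' Finset.univ_nonempty fun i => ⟪x i, v⟫) ''
    sphere (0 : EuclideanSpace ℝ (Fin n)) 1)

lemma arith (δ d r K τ : ℝ) (hd : 0 < d) (hK2 : 2 ≤ K)
    (hKδ : δ * K = 2) (hτ : τ * K^2 = 1/2) (hr0 : 0 ≤ r)
    (hrR : r < K * d * (1 + τ)) (P B : ℝ) (hP : r * (δ * d) < P) (hB : B ≤ d^2) :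
    r^2 - 2*P + B < (K*d)^2 := by
  have hK0 : (0:ℝ) < K := by linarith
  have hτ0 : 0 < τ := by nlinarith [pow_pos hK0 2]
  have hR0 : 0 < K * d * (1 + τ) := by positivity
  have hKK : 4 ≤ K * K := by nlinarith
  have hδd : δ * d * K = 2 * d := by
    calc δ * d * K = δ * K * d := by ring
    _ = 2 * d := by rw [hKδ]
  have hgR : (K*d*(1+τ))^2 - 2*(δ*d)*(K*d*(1+τ)) + d^2 < (K*d)^2 := by
    have e2 : (K*d*(1+τ))^2 = (K*d)^2 + (τ * K^2 * (2 + τ)) * d^2 := by ring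
    have e3 : 2*(δ*d)*(K*d*(1+τ)) = 4 * d^2 * (1+τ) := by
      calc 2*(δ*d)*(K*d*(1+τ)) = 2 * (δ * d * K) * (d * (1+τ)) := by ring
      _ = 4 * d^2 * (1+τ) := by rw [hδd]; ring
    have e4 : τ * K^2 * (2 + τ) = 1 + τ/2 := by rw [hτ]; ring
    rw [e2, e3, e4]
    nlinarith [mul_pos hτ0 (mul_pos hd hd)]
  have hconv : (K*d*(1+τ))*(r^2 - 2*(δ*d)*r + d^2) ≤ ((K*d*(1+τ)) - r)*d^2
      + r*((K*d*(1+τ))^2 - 2*(δ*d)*(K*d*(1+τ)) + d^2) := by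
    nlinarith [mul_nonneg (mul_nonneg hr0 hR0.le) (sub_nonneg.2 hrR.le)]
  have hd2 : d^2 < (K*d)^2 := by nlinarith [mul_pos hd hd]
  have hgr : r^2 - 2*(δ*d)*r + d^2 < (K*d)^2 := by
    nlinarith [mul_nonneg (sub_nonneg.2 hrR.le) (sub_nonneg.2 hd2.le),
      mul_nonneg hr0 (sub_nonneg.2 hgR.le)]
  nlinarith [hgr, hP, hB]

theorem stmt_10 (n : ℕ) (hn : 2 ≤ n) (γ : ℝ) (hγ : γ ∈ Set.Ioo (0 : ℝ) 1) :
    ∃ τhat : ℝ, 0 < τhat ∧ ∃ K : ℝ, 2 / γ ≤ K ∧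
      ∀ x : Fin (n + 1) → EuclideanSpace ℝ (Fin n), AffineIndependent ℝ x →
        γ < simplexWidth x / diam (convexHull ℝ (Set.range x)) →
        ball ((n + 1 : ℝ)⁻¹ • ∑ i, x i)
            (K * diam (convexHull ℝ (Set.range x)) * (1 + τhat))
          ⊆ ⋃ i : Fin (n + 1), ball (x i) (K * diam (convexHull ℝ (Set.range x))) := by
  obtain ⟨hγ0, hγ1⟩ := hγ
  have hn1 : (0:ℝ) < n + 1 := by positivity
  set δ : ℝ := γ / (n + 1) with hδdef
  have hδ0 : 0 < δ := by positivity
  set K : ℝ := 2 / δ with hKdef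
  have hδγ : δ ≤ γ := by
    rw [hδdef, div_le_iff₀ hn1]
    nlinarith
  have hδ1 : δ < 1 := lt_of_le_of_lt hδγ hγ1
  have hK0 : 0 < K := by positivity
  have hK2 : 2 ≤ K := by
    rw [hKdef, le_div_iff₀ hδ0]; nlinarith
  have hKδ : δ * K = 2 := by
    rw [hKdef]; field_simp
  set τ : ℝ := 1 / (2 * K ^ 2) with hτdef
  have hτpos : 0 < τ := by positivity
  have hτK : τ * K ^ 2 = 1 / 2 := by
    rw [hτdef]; field_simp
  refine ⟨τ, hτpos, K, ?_, ?_⟩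
  · rw [hKdef]
    exact div_le_div_of_nonneg_left (by norm_num) hδ0 hδγ
  intro x hx hwd
  set d := diam (convexHull ℝ (Set.range x)) with hd
  have hd0 : 0 < d := by
    have hne : d ≠ 0 := by
      intro h0
      rw [h0, div_zero] at hwd
      linarith
    exact lt_of_le_of_ne diam_nonneg (Ne.symm hne)
  have hwidth : γ * d < simplexWidth x := by
    rw [← lt_div_iff₀ hd0]; exact hwd
  set x₀ : EuclideanSpace ℝ (Fin n) := (n + 1 : ℝ)⁻¹ • ∑ i, x i with hx₀
  have hbddS : Bornology.IsBounded (convexHull ℝ (Set.range x)) :=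
    isBounded_convexHull.mpr (Set.finite_range x).isBounded
  have hximem : ∀ i, x i ∈ convexHull ℝ (Set.range x) := fun i =>
    subset_convexHull ℝ _ (mem_range_self i)
  have hx₀mem : x₀ ∈ convexHull ℝ (Set.range x) := by
    have h := (convex_convexHull ℝ (Set.range x)).sum_mem
      (t := (Finset.univ : Finset (Fin (n+1)))) (w := fun _ => (n + 1 : ℝ)⁻¹)
      (z := x) (fun i _ => by positivity) ?_ (fun i _ => hximem i)
    · rwa [hx₀, Finset.smul_sum]
    · simp [Finset.sum_const, Finset.card_univ]
      field_simp
  have hdistx₀ : ∀ i, dist x₀ (x i) ≤ d :=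
    fun i => dist_le_diam_of_mem hbddS hx₀mem (hximem i)
  intro y hy
  rw [mem_ball, dist_eq_norm] at hy
  by_cases hy0 : y = x₀
  · refine mem_iUnion.2 ⟨0, mem_ball.2 ?_⟩
    rw [hy0, dist_comm]
    calc dist (x 0) x₀ = dist x₀ (x 0) := dist_comm _ _
    _ ≤ d := hdistx₀ 0
    _ < K * d := by nlinarith
  have hr0 : (0:ℝ) < ‖y - x₀‖ := by
    rw [norm_pos_iff, sub_ne_zero]; exact hy0
  set r : ℝ := ‖y - x₀‖ with hr
  set u : EuclideanSpace ℝ (Fin n) := r⁻¹ • (y - x₀) with hu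
  have humem : u ∈ sphere (0 : EuclideanSpace ℝ (Fin n)) 1 := by
    rw [mem_sphere_zero_iff_norm, hu, norm_smul, norm_inv, norm_norm, ← hr,
      inv_mul_cancel₀ hr0.ne']
  set f : Fin (n+1) → ℝ := fun i => ⟪x i, u⟫ with hf
  have hbdd : BddBelow ((fun v => (Finset.univ.sup' Finset.univ_nonempty fun i => ⟪x i, v⟫)
      - Finset.univ.inf' Finset.univ_nonempty fun i => ⟪x i, v⟫) ''
      sphere (0 : EuclideanSpace ℝ (Fin n)) 1) := by
    refine ⟨0, ?_⟩
    rintro a ⟨v, hv, rfl⟩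
    have h1 := Finset.inf'_le (fun i => ⟪x i, v⟫) (Finset.mem_univ (0 : Fin (n+1)))
    have h2 := Finset.le_sup' (fun i => ⟪x i, v⟫) (Finset.mem_univ (0 : Fin (n+1)))
    simp only [sub_nonneg]
    linarith
  have hWle : simplexWidth x ≤ (Finset.univ.sup' Finset.univ_nonempty f)
      - Finset.univ.inf' Finset.univ_nonempty f :=
    csInf_le hbdd ⟨u, humem, rfl⟩
  obtain ⟨i, _, hi⟩ := Finset.exists_mem_eq_sup' (Finset.univ_nonempty) f
  obtain ⟨j, _, hj⟩ := Finset.exists_mem_eq_inf' (Finset.univ_nonempty) f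
  -- centroid inner product
  have hcent : ⟪x₀, u⟫ = (n + 1 : ℝ)⁻¹ * ∑ k, f k := by
    rw [hx₀, real_inner_smul_left, sum_inner]
  -- sum bound
  have hsum : ∑ k, f k ≤ f j + n * f i := by
    have hins : (Finset.univ : Finset (Fin (n+1))) = insert j (Finset.univ.erase j) := by
      rw [Finset.insert_erase (Finset.mem_univ j)]
    rw [hins, Finset.sum_insert (Finset.notMem_erase j _)]
    have hb : ∑ k ∈ Finset.univ.erase j, f k ≤ (Finset.univ.erase j).card • f i := by
      apply Finset.sum_le_card_nsmul
      intro k _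
      rw [← hi]; exact Finset.le_sup' f (Finset.mem_univ k)
    rw [Finset.card_erase_of_mem (Finset.mem_univ j), Finset.card_univ, Fintype.card_fin] at hb
    rw [nsmul_eq_mul] at hb
    push_cast at hb ⊢
    linarith
  have hwid2 : γ * d < f i - f j := by
    have := hWle
    rw [hi, hj] at this
    linarith
  have hγδ : γ = δ * (n + 1) := by rw [hδdef]; field_simp
  have hkey : δ * d < f i - ⟪x₀, u⟫ := by
    rw [hcent]
    have h1 : (n + 1 : ℝ) * ((n + 1 : ℝ)⁻¹ * ∑ k, f k) = ∑ k, f k := by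
      field_simp
    have h2 : (n+1:ℝ) * (f i - (n + 1 : ℝ)⁻¹ * ∑ k, f k) ≥ f i - f j := by
      rw [mul_sub, h1]
      push_cast
      linarith
    rw [hγδ] at hwid2
    nlinarith
  -- inner product with y - x₀
  have hinner : r * (δ * d) < ⟪y - x₀, x i - x₀⟫ := by
    have e1 : f i - ⟪x₀, u⟫ = ⟪x i - x₀, u⟫ := by
      rw [hf]; simp [inner_sub_left]
    have e2 : ⟪x i - x₀, u⟫ = r⁻¹ * ⟪x i - x₀, y - x₀⟫ := by
      rw [hu, real_inner_smul_right]
    have := hkey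
    rw [e1, e2] at this
    rw [real_inner_comm]
    calc r * (δ * d) < r * (r⁻¹ * ⟪x i - x₀, y - x₀⟫) :=
      (mul_lt_mul_iff_right₀ hr0).2 this
    _ = ⟪x i - x₀, y - x₀⟫ := by field_simp
  refine mem_iUnion.2 ⟨i, mem_ball.2 ?_⟩
  rw [dist_eq_norm]
  have hKd0 : 0 ≤ K * d := by positivity
  refine lt_of_pow_lt_pow_left₀ 2 hKd0 ?_
  have hexp : ‖y - x i‖ ^ 2 = r ^ 2 - 2 * ⟪y - x₀, x i - x₀⟫ + ‖x i - x₀‖ ^ 2 := by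
    have hsub : y - x i = (y - x₀) - (x i - x₀) := by abel
    rw [hsub, norm_sub_sq_real, hr]
  rw [hexp]
  have hB : ‖x i - x₀‖ ^ 2 ≤ d ^ 2 := by
    have h1 : ‖x i - x₀‖ ≤ d := by
      rw [← dist_eq_norm, dist_comm]; exact hdistx₀ i
    exact pow_le_pow_left₀ (norm_nonneg _) h1 2
  exact arith δ d r K τ hd0 hK2 hKδ hτK hr0.le hy _ _ hinner hB
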